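/- Let X and Y be finite-dimensional normed spaces over ℝ, and endow the direct sum X ⊕ Y with a norm ‖·‖ satisfying ‖x‖ ≤ ‖(x,y)‖ and ‖y‖ ≤ ‖(x,y)‖ for all (x,y) ∈ X ⊕ Y. Let A_X be a sufficient enlargement for X and A_Y a sufficient enlargement for Y. Then the Minkowski sum A_X + A_Y = {(x, y) : x ∈ A_X, y ∈ A_Y} ⊆ X ⊕ Y is a sufficient enlargement for (X ⊕ Y, ‖·‖). -/

import Mathlib

set_option maxHeartbeats 1000000


open Metric
open scoped ENNReal

noncomputable section

universe u

/-- A bounded, closed, convex, symmetric subset `A` of a finite-dimensional normed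
space `X` is a sufficient enlargement for `X` if for every Banach space `Y` and every
linear isometric embedding `i : X → Y` there is a continuous linear projection of `Y`
onto `i(X)` mapping the closed unit ball of `Y` into `i(A)`. -/
def IsSufficientEnlargement {X : Type*} [NormedAddCommGroup X] [NormedSpace ℝ X]
    [FiniteDimensional ℝ X] (A : Set X) : Prop :=
  Bornology.IsBounded A ∧ IsClosed A ∧ Convex ℝ A ∧ A = -A ∧
  ∀ (Y : Type u) [NormedAddCommGroup Y] [NormedSpace ℝ Y] [CompleteSpace Y]
    (i : X →ₗᵢ[ℝ] Y),
    ∃ P : Y →L[ℝ] Y,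
      (∀ x : X, P (i x) = i x) ∧
      LinearMap.range (P : Y →ₗ[ℝ] Y) = LinearMap.range i.toLinearMap ∧
      P '' closedBall 0 1 ⊆ i '' A


section helpers
variable {W : Type*} [NormedAddCommGroup W] [NormedSpace ℝ W]

def toLpInfty (F : ℕ → (W →L[ℝ] ℝ)) (hF : ∀ n, ‖F n‖ ≤ 1) :
    W →ₗ[ℝ] lp (fun _ : ℕ => ℝ) ∞ where
  toFun w := ⟨fun n => F n w, memℓp_infty ⟨‖w‖, by
    rintro r ⟨n, rfl⟩
    calc ‖F n w‖ ≤ ‖F n‖ * ‖w‖ := (F n).le_opNorm w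
      _ ≤ 1 * ‖w‖ := by nlinarith [hF n, norm_nonneg w]
      _ = ‖w‖ := one_mul _⟩⟩
  map_add' a b := by ext n; simp; rfl
  map_smul' c a := by ext n; simp

lemma toLpInfty_apply (F : ℕ → (W →L[ℝ] ℝ)) (hF : ∀ n, ‖F n‖ ≤ 1) (w : W) (n : ℕ) :
    (toLpInfty F hF w : ∀ _ : ℕ, ℝ) n = F n w := rfl

lemma toLpInfty_norm_le (F : ℕ → (W →L[ℝ] ℝ)) (hF : ∀ n, ‖F n‖ ≤ 1) (w : W) :
    ‖toLpInfty F hF w‖ ≤ ‖w‖ := by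
  apply lp.norm_le_of_forall_le (norm_nonneg w)
  intro n
  calc ‖F n w‖ ≤ ‖F n‖ * ‖w‖ := (F n).le_opNorm w
    _ ≤ 1 * ‖w‖ := by nlinarith [hF n, norm_nonneg w]
    _ = ‖w‖ := one_mul _

end helpers

lemma norming_seq (X : Type*) [NormedAddCommGroup X] [NormedSpace ℝ X]
    [FiniteDimensional ℝ X] :
    ∃ g : ℕ → (X →L[ℝ] ℝ), (∀ n, ‖g n‖ ≤ 1) ∧
      ∀ (x : X) (ε : ℝ), 0 < ε → ∃ n, ‖x‖ - ε ≤ g n x := by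
  obtain ⟨u, hu⟩ := TopologicalSpace.exists_dense_seq (X →L[ℝ] ℝ)
  refine ⟨fun n => if ‖u n‖ ≤ 1 then u n else 0, fun n => ?_, fun x ε hε => ?_⟩
  · dsimp only; split_ifs with h
    · exact h
    · simp
  · rcases eq_or_ne x 0 with rfl | hx
    · exact ⟨0, by simp [hε.le]⟩
    obtain ⟨f, hf1, hfx⟩ := exists_dual_vector ℝ x (norm_ne_zero_iff.mpr hx)
    have hxpos : (0:ℝ) < ‖x‖ := norm_pos_iff.mpr hx
    set δ : ℝ := min (ε / (2 * (‖x‖ + 1))) 1 with hδdef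
    have hδpos : 0 < δ := lt_min (by positivity) one_pos
    have hδ1 : δ ≤ 1 := min_le_right _ _
    have hδε : 2 * δ * ‖x‖ ≤ ε := by
      have h1 : δ ≤ ε / (2 * (‖x‖ + 1)) := min_le_left _ _
      have h2 : 2 * δ * ‖x‖ ≤ 2 * (ε / (2 * (‖x‖ + 1))) * (‖x‖ + 1) := by
        have : (0:ℝ) < ‖x‖ + 1 := by positivity
        nlinarith
      have h3 : 2 * (ε / (2 * (‖x‖ + 1))) * (‖x‖ + 1) = ε := by
        field_simp
      linarith
    set f' : X →L[ℝ] ℝ := (1 - δ) • f with hf'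
    have hf'n : ‖f'‖ = 1 - δ := by
      rw [hf']
      have hns := norm_smul (1 - δ) f
      rw [hns, hf1, Real.norm_eq_abs, abs_of_nonneg (by linarith : (0:ℝ) ≤ 1 - δ), mul_one]
    obtain ⟨n, hn⟩ := Metric.denseRange_iff.mp hu f' δ hδpos
    rw [dist_eq_norm] at hn
    have hun : ‖u n‖ ≤ 1 := by
      calc ‖u n‖ = ‖f' + (u n - f')‖ := by congr 1; abel
        _ ≤ ‖f'‖ + ‖u n - f'‖ := norm_add_le _ _
        _ ≤ (1 - δ) + δ := by
            rw [hf'n]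
            have : ‖u n - f'‖ ≤ δ := by
              rw [← norm_neg]; simpa [neg_sub] using hn.le
            linarith
        _ = 1 := by ring
    refine ⟨n, ?_⟩
    have h1 : |u n x - f' x| ≤ δ * ‖x‖ := by
      have h := (u n - f').le_opNorm x
      have h2 : ‖u n - f'‖ ≤ δ := by
        rw [← norm_neg]; simpa [neg_sub] using hn.le
      have h3 : (u n - f') x = u n x - f' x := rfl
      rw [h3] at h
      calc |u n x - f' x| ≤ ‖u n - f'‖ * ‖x‖ := h
        _ ≤ δ * ‖x‖ := by nlinarith
    have h2 : f' x = (1 - δ) * ‖x‖ := by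
      simp [hf', hfx]
    have h3 : u n x ≥ (1 - δ) * ‖x‖ - δ * ‖x‖ := by
      have := abs_le.mp h1
      linarith [this.1]
    simp only [if_pos hun]
    nlinarith

lemma key {X : Type*} [NormedAddCommGroup X] [NormedSpace ℝ X] [FiniteDimensional ℝ X]
    (A : Set X) (hA : IsSufficientEnlargement.{u, _} A)
    {Z : Type*} [NormedAddCommGroup Z] [NormedSpace ℝ Z] [FiniteDimensional ℝ Z]
    {W : Type*} [NormedAddCommGroup W] [NormedSpace ℝ W] [CompleteSpace W]
    (φ : Z →ₗᵢ[ℝ] W) (π : Z →ₗ[ℝ] X) (hπ : ∀ z, ‖π z‖ ≤ ‖z‖) :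
    ∃ q : W →L[ℝ] X, (∀ z, q (φ z) = π z) ∧ ∀ w, ‖w‖ ≤ 1 → q w ∈ A := by
  classical
  obtain ⟨g, hg1, hg2⟩ := norming_seq X
  -- the isometric embedding of X into ℓ∞
  set k : X →ₗ[ℝ] lp (fun _ : ℕ => ℝ) ∞ := toLpInfty g hg1 with hk
  have hkiso : ∀ x, ‖k x‖ = ‖x‖ := by
    intro x
    refine le_antisymm (toLpInfty_norm_le g hg1 x) ?_
    refine le_of_forall_pos_le_add (fun ε hε => ?_)
    obtain ⟨n, hn⟩ := hg2 x ε hε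
    have h1 : g n x ≤ ‖(k x : ∀ _ : ℕ, ℝ) n‖ := le_abs_self _
    have h2 : ‖(k x : ∀ _ : ℕ, ℝ) n‖ ≤ ‖k x‖ :=
      lp.norm_apply_le_norm ENNReal.top_ne_zero (k x) n
    have h3 : (k x : ∀ _ : ℕ, ℝ) n = g n x := rfl
    linarith [hn]
  -- the subspace V = φ(Z) of W and functionals on it
  set V : Submodule ℝ W := LinearMap.range φ.toLinearMap with hV
  haveI : FiniteDimensional ℝ V := LinearMap.finiteDimensional_range φ.toLinearMap
  set ψ : Z ≃ₗ[ℝ] V := LinearEquiv.ofInjective φ.toLinearMap φ.injective with hψ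
  have hψap : ∀ z, (ψ z : W) = φ z := fun z => rfl
  set c : ℕ → (V →L[ℝ] ℝ) := fun n =>
    LinearMap.toContinuousLinearMap
      ((g n).toLinearMap ∘ₗ π ∘ₗ ψ.symm.toLinearMap) with hc
  have hcap : ∀ (n) (v : V), c n v = g n (π (ψ.symm v)) := fun n v => rfl
  have hcnorm : ∀ n, ‖c n‖ ≤ 1 := by
    intro n
    refine ContinuousLinearMap.opNorm_le_bound _ zero_le_one (fun v => ?_)
    rw [hcap, one_mul]
    have h1 : ‖g n (π (ψ.symm v))‖ ≤ ‖π (ψ.symm v)‖ := by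
      calc ‖g n (π (ψ.symm v))‖ ≤ ‖g n‖ * ‖π (ψ.symm v)‖ := (g n).le_opNorm _
        _ ≤ 1 * ‖π (ψ.symm v)‖ := by nlinarith [hg1 n, norm_nonneg (π (ψ.symm v))]
        _ = _ := one_mul _
    have h2 : ‖π (ψ.symm v)‖ ≤ ‖ψ.symm v‖ := hπ _
    have h3 : ‖φ (ψ.symm v)‖ = ‖ψ.symm v‖ := φ.norm_map _
    have h4 : (v : W) = φ (ψ.symm v) := by
      rw [← hψap, ψ.apply_symm_apply]
    have h5 : ‖v‖ = ‖(v : W)‖ := rfl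
    rw [h5, h4, h3]
    linarith
  -- Hahn-Banach extensions
  choose F hF1 hF2 using fun n => exists_extension_norm_eq V (c n)
  have hFle : ∀ n, ‖F n‖ ≤ 1 := fun n => (hF2 n).le.trans (hcnorm n)
  set T : W →ₗ[ℝ] lp (fun _ : ℕ => ℝ) ∞ := toLpInfty F hFle with hT
  have hTφ : ∀ z, T (φ z) = k (π z) := by
    intro z
    ext n
    have h1 : (T (φ z) : ∀ _ : ℕ, ℝ) n = F n (φ z) := rfl
    have h2 : (k (π z) : ∀ _ : ℕ, ℝ) n = g n (π z) := rfl
    rw [h1, h2]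
    have h3 : φ z = ((ψ z : V) : W) := (hψap z).symm
    rw [h3, hF1 n (ψ z), hcap, ψ.symm_apply_apply]
  have hTnorm : ∀ w, ‖T w‖ ≤ ‖w‖ := toLpInfty_norm_le F hFle
  -- apply the enlargement property in universe u via ULift
  set L := lp (fun _ : ℕ => ℝ) ∞
  set upIso : ULift.{u} L ≃ₗᵢ[ℝ] L := LinearIsometryEquiv.ulift ℝ L with hup
  set uk : X →ₗᵢ[ℝ] ULift.{u} L :=
    upIso.symm.toLinearIsometry.comp ⟨k, hkiso⟩ with huk
  obtain ⟨P, hP1, hP2, hP3⟩ := hA.2.2.2.2 (ULift.{u} L) uk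
  set slin : W →ₗ[ℝ] ULift.{u} L :=
    P.toLinearMap ∘ₗ upIso.symm.toLinearEquiv.toLinearMap ∘ₗ T with hslin
  have hslinap : ∀ w, slin w = P (upIso.symm (T w)) := fun w => rfl
  have hmem : ∀ w, slin w ∈ LinearMap.range uk.toLinearMap := by
    intro w
    rw [← hP2]
    exact ⟨upIso.symm (T w), rfl⟩
  set ρ : X ≃ₗ[ℝ] LinearMap.range uk.toLinearMap :=
    LinearEquiv.ofInjective uk.toLinearMap uk.injective with hρ
  have hρap : ∀ x, (ρ x : ULift.{u} L) = uk x := fun x => rfl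
  set qlin : W →ₗ[ℝ] X :=
    ρ.symm.toLinearMap ∘ₗ (slin.codRestrict (LinearMap.range uk.toLinearMap) hmem)
    with hqlin
  have huq : ∀ w, uk (qlin w) = slin w := by
    intro w
    have h1 : qlin w = ρ.symm ⟨slin w, hmem w⟩ := rfl
    rw [h1, ← hρap, ρ.apply_symm_apply]
  -- property (a)
  have ha : ∀ z, qlin (φ z) = π z := by
    intro z
    apply uk.injective
    rw [huq, hslinap, hTφ]
    have : upIso.symm (k (π z)) = uk (π z) := rfl
    rw [this, hP1]
  -- property (b)
  have hb : ∀ w, ‖w‖ ≤ 1 → qlin w ∈ A := by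
    intro w hw
    have h1 : upIso.symm (T w) ∈ closedBall (0 : ULift.{u} L) 1 := by
      rw [mem_closedBall_zero_iff]
      rw [upIso.symm.norm_map]
      exact (hTnorm w).trans hw
    have h2 : slin w ∈ ⇑uk '' A := by
      rw [hslinap]
      exact hP3 ⟨_, h1, rfl⟩
    obtain ⟨a, haA, hae⟩ := h2
    have : a = qlin w := uk.injective (by rw [hae, huq])
    rwa [← this]
  -- continuity
  obtain ⟨C, hC⟩ := hA.1.exists_norm_le
  have hbound : ∀ w, ‖qlin w‖ ≤ max C 0 * ‖w‖ := by
    intro w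
    rcases eq_or_ne w 0 with rfl | hw
    · simp
    · have hwpos : (0:ℝ) < ‖w‖ := norm_pos_iff.mpr hw
      set t := ‖w‖⁻¹ • w with ht
      have htn : ‖t‖ = 1 := by
        rw [ht, norm_smul, norm_inv, norm_norm, inv_mul_cancel₀ hwpos.ne']
      have h1 : qlin t ∈ A := hb t htn.le
      have h2 : qlin w = ‖w‖ • qlin t := by
        rw [ht, map_smul, smul_smul, mul_inv_cancel₀ hwpos.ne', one_smul]
      rw [h2, norm_smul, norm_norm, mul_comm]
      have h3 : ‖qlin t‖ ≤ C := hC _ h1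
      have h4 : ‖qlin t‖ ≤ max C 0 := h3.trans (le_max_left _ _)
      exact mul_le_mul_of_nonneg_right h4 (norm_nonneg w)
  refine ⟨qlin.mkContinuous (max C 0) hbound, fun z => ?_, fun w hw => ?_⟩
  · rw [LinearMap.mkContinuous_apply]; exact ha z
  · rw [LinearMap.mkContinuous_apply]; exact hb w hw

/-- If `Z` carries a norm on the direct sum `X ⊕ Y` dominating both coordinate norms,
then the Minkowski sum of sufficient enlargements of `X` and of `Y` is a sufficient
enlargement of `Z`. -/
theorem minkowski_sum_sufficientEnlargement
    (X : Type*) [NormedAddCommGroup X] [NormedSpace ℝ X] [FiniteDimensional ℝ X]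
    (Y : Type*) [NormedAddCommGroup Y] [NormedSpace ℝ Y] [FiniteDimensional ℝ Y]
    (Z : Type*) [NormedAddCommGroup Z] [NormedSpace ℝ Z] [FiniteDimensional ℝ Z]
    (e : (X × Y) ≃ₗ[ℝ] Z)
    (h1 : ∀ (x : X) (y : Y), ‖x‖ ≤ ‖e (x, y)‖)
    (h2 : ∀ (x : X) (y : Y), ‖y‖ ≤ ‖e (x, y)‖)
    (AX : Set X) (hAX : IsSufficientEnlargement AX)
    (AY : Set Y) (hAY : IsSufficientEnlargement AY) :
    IsSufficientEnlargement (⇑e '' (AX ×ˢ AY)) := by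
  have econt : Continuous ⇑e := LinearMap.continuous_of_finiteDimensional e.toLinearMap
  have hSc : IsCompact (AX ×ˢ AY) := by
    have hclosed : IsClosed (AX ×ˢ AY) := (hAX.2.1).prod (hAY.2.1)
    have hbdd : Bornology.IsBounded (AX ×ˢ AY) := (hAX.1).prod (hAY.1)
    exact Metric.isCompact_of_isClosed_isBounded hclosed hbdd
  have himc : IsCompact (⇑e '' (AX ×ˢ AY)) := hSc.image econt
  have hnegX : ∀ a ∈ AX, -a ∈ AX := by
    intro a ha
    rw [hAX.2.2.2.1]
    simpa using ha
  have hnegY : ∀ a ∈ AY, -a ∈ AY := by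
    intro a ha
    rw [hAY.2.2.2.1]
    simpa using ha
  refine ⟨himc.isBounded, himc.isClosed, ?_, ?_, ?_⟩
  · have := ((hAX.2.2.1).prod (hAY.2.2.1)).linear_image e.toLinearMap
    simpa using this
  · ext z
    simp only [Set.mem_neg, Set.mem_image, Set.mem_prod, Prod.exists]
    constructor
    · rintro ⟨x, y, ⟨hx, hy⟩, rfl⟩
      refine ⟨-x, -y, ⟨hnegX x hx, hnegY y hy⟩, ?_⟩
      rw [show ((-x, -y) : X × Y) = -(x, y) from rfl, map_neg]
    · rintro ⟨x, y, ⟨hx, hy⟩, hz⟩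
      refine ⟨-x, -y, ⟨hnegX x hx, hnegY y hy⟩, ?_⟩
      rw [show ((-x, -y) : X × Y) = -(x, y) from rfl, map_neg, hz, neg_neg]
  · intro W _ _ _ i
    set π1 : Z →ₗ[ℝ] X := (LinearMap.fst ℝ X Y) ∘ₗ e.symm.toLinearMap with hπ1def
    set π2 : Z →ₗ[ℝ] Y := (LinearMap.snd ℝ X Y) ∘ₗ e.symm.toLinearMap with hπ2def
    have hπ1 : ∀ z, ‖π1 z‖ ≤ ‖z‖ := by
      intro z
      calc ‖π1 z‖ = ‖(e.symm z).1‖ := rfl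
        _ ≤ ‖e ((e.symm z).1, (e.symm z).2)‖ := h1 _ _
        _ = ‖z‖ := by rw [Prod.mk.eta, e.apply_symm_apply]
    have hπ2 : ∀ z, ‖π2 z‖ ≤ ‖z‖ := by
      intro z
      calc ‖π2 z‖ = ‖(e.symm z).2‖ := rfl
        _ ≤ ‖e ((e.symm z).1, (e.symm z).2)‖ := h2 _ _
        _ = ‖z‖ := by rw [Prod.mk.eta, e.apply_symm_apply]
    obtain ⟨q1, hq1a, hq1b⟩ := key AX hAX i π1 hπ1
    obtain ⟨q2, hq2a, hq2b⟩ := key AY hAY i π2 hπ2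
    set Q : W →L[ℝ] (X × Y) := q1.prod q2 with hQ
    set eC : (X × Y) →L[ℝ] Z := LinearMap.toContinuousLinearMap e.toLinearMap with heC
    set P : W →L[ℝ] W := i.toContinuousLinearMap.comp (eC.comp Q) with hP
    have hPap : ∀ w, P w = i (e (q1 w, q2 w)) := fun w => rfl
    have hfix : ∀ z : Z, P (i z) = i z := by
      intro z
      rw [hPap, hq1a, hq2a]
      show i (e ((e.symm z).1, (e.symm z).2)) = i z
      rw [Prod.mk.eta, e.apply_symm_apply]
    refine ⟨P, hfix, ?_, ?_⟩
    · ext w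
      constructor
      · rintro ⟨w', rfl⟩
        exact ⟨e (q1 w', q2 w'), (hPap w').symm⟩
      · rintro ⟨z, rfl⟩
        exact ⟨i z, hfix z⟩
    · rintro w ⟨w', hw', rfl⟩
      rw [mem_closedBall_zero_iff] at hw'
      exact ⟨e (q1 w', q2 w'), ⟨(q1 w', q2 w'), ⟨hq1b w' hw', hq2b w' hw'⟩, rfl⟩,
        (hPap w').symm⟩


end
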